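/- Let G ≤ Sym(X) with X countable and G closed and locally oligomorphic. Then G has only countably many open subgroups. -/

import Mathlib

open Pointwise

/-- Topology of pointwise convergence on the symmetric group of a (discrete) set. -/
instance permTop (M : Type*) : TopologicalSpace (Equiv.Perm M) :=
  letI : TopologicalSpace M := ⊥
  TopologicalSpace.induced
    (fun g => ((fun x => g x, fun x => g.symm x) : (M → M) × (M → M))) inferInstance

/-- A topological group is Roelcke precompact if every open neighbourhood `U` of the identity
admits a finite set `E` with `G = U * E * U`. -/
def RoelckePrecompact (G : Type*) [Group G] [TopologicalSpace G] : Prop :=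
  ∀ U : Set G, IsOpen U → (1 : G) ∈ U →
    ∃ E : Finset G, ∀ x : G, ∃ u₁ ∈ U, ∃ e ∈ E, ∃ u₂ ∈ U, x = u₁ * e * u₂

/-- `Y` is a union of finitely many `G`-orbits. -/
def IsFinOrbitUnion {X : Type*} (G : Subgroup (Equiv.Perm X)) (Y : Set X) : Prop :=
  ∃ S : Finset X, Y = ⋃ a ∈ S, MulAction.orbit G a

/-- `G` acts oligomorphically on `Y`: finitely many orbits on `Yⁿ` for all `n`. -/
def Oligo {X : Type*} (G : Subgroup (Equiv.Perm X)) (Y : Set X) : Prop :=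
  ∀ n : ℕ, ∃ T : Finset (Fin n → X), ∀ f : Fin n → X, (∀ i, f i ∈ Y) →
    ∃ t ∈ T, ∃ g ∈ G, ∀ i, g (t i) = f i

/-- `G` is locally oligomorphic on `X`. -/
def LocallyOligo {X : Type*} (G : Subgroup (Equiv.Perm X)) : Prop :=
  ∀ Y : Set X, IsFinOrbitUnion G Y → Oligo G Y

/-- The pointwise stabilizer of `E` in `G ≤ Sym(M)`. -/
def ptStab {M : Type*} (G : Subgroup (Equiv.Perm M)) (E : Set M) : Subgroup (Equiv.Perm M) :=
  G ⊓ ⨅ a ∈ E, MulAction.stabilizer (Equiv.Perm M) a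

/-- The algebraic closure of `E`: the union of the finite orbits of the pointwise
stabilizer of `E` in `G`. -/
def acl {M : Type*} (G : Subgroup (Equiv.Perm M)) (E : Set M) : Set M :=
  {x | (MulAction.orbit (ptStab G E) x).Finite}

/-- The intersection of the open finite-index subgroups of a topological group. -/
def Gcirc (G : Type*) [Group G] [TopologicalSpace G] : Subgroup G :=
  ⨅ U ∈ {U : Subgroup G | IsOpen (U : Set G) ∧ U.index ≠ 0}, U

-- probes

section Aux
variable {X : Type*} (G : Subgroup (Equiv.Perm X))


/-- Pointwise stabilizer of a finite set, as a subgroup of `G`. -/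
def fixSub (A : Finset X) : Subgroup ↥G where
  carrier := {g : ↥G | ∀ a ∈ A, (g : Equiv.Perm X) a = a}
  one_mem' := fun a _ => rfl
  mul_mem' := by
    intro g h hg hh a ha
    have : ((g * h : ↥G) : Equiv.Perm X) a = (g : Equiv.Perm X) ((h : Equiv.Perm X) a) := rfl
    rw [this, hh a ha, hg a ha]
  inv_mem' := by
    intro g hg a ha
    have h1 : ((g⁻¹ : ↥G) : Equiv.Perm X) = (g : Equiv.Perm X)⁻¹ := rfl
    rw [h1]
    nth_rewrite 1 [← hg a ha]
    exact Equiv.symm_apply_apply _ _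

lemma open_contains_fix (U : Subgroup ↥G) (hU : IsOpen (U : Set ↥G)) :
    ∃ A : Finset X, ∀ g : ↥G, (∀ a ∈ A, (g : Equiv.Perm X) a = a) → g ∈ U := by
  classical
  letI : TopologicalSpace X := ⊥
  obtain ⟨V, hVopen, hVU⟩ :=
    (isOpen_induced_iff (f := (Subtype.val : ↥G → Equiv.Perm X))).mp hU
  obtain ⟨W, hWopen, hWV⟩ :=
    (isOpen_induced_iff
      (f := fun g : Equiv.Perm X =>
        ((fun x => g x, fun x => g.symm x) : (X → X) × (X → X)))).mp hVopen
  have h1V : (1 : Equiv.Perm X) ∈ V := by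
    have h : (1 : ↥G) ∈ (U : Set ↥G) := U.one_mem
    rw [← hVU] at h
    exact h
  have hW1 : ((fun x => (1 : Equiv.Perm X) x, fun x => (1 : Equiv.Perm X).symm x) :
      (X → X) × (X → X)) ∈ W := by
    rw [← hWV] at h1V
    exact h1V
  obtain ⟨W₁, W₂, hW₁o, hW₂o, hm₁, hm₂, hsub⟩ := isOpen_prod_iff.mp hWopen _ _ hW1
  obtain ⟨I₁, u₁, hu₁, hpi₁⟩ := isOpen_pi_iff.mp hW₁o _ hm₁
  obtain ⟨I₂, u₂, hu₂, hpi₂⟩ := isOpen_pi_iff.mp hW₂o _ hm₂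
  refine ⟨I₁ ∪ I₂, fun g hg => ?_⟩
  have hmemV : (g : Equiv.Perm X) ∈ V := by
    rw [← hWV]
    apply hsub
    refine ⟨hpi₁ ?_, hpi₂ ?_⟩
    · intro i hi
      have h2 := (hu₁ i hi).2
      simp only [Equiv.Perm.one_apply] at h2
      show (g : Equiv.Perm X) i ∈ u₁ i
      rw [hg i (Finset.mem_union_left _ hi)]
      exact h2
    · intro i hi
      have h2 := (hu₂ i hi).2
      have hfix : (g : Equiv.Perm X) i = i := hg i (Finset.mem_union_right _ hi)
      have hsymm : (g : Equiv.Perm X).symm i = i := (Equiv.symm_apply_eq _).mpr hfix.symm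
      show (g : Equiv.Perm X).symm i ∈ u₂ i
      rw [hsymm]
      exact h2
  have : g ∈ (Subtype.val ⁻¹' V : Set ↥G) := hmemV
  rw [hVU] at this
  exact this

lemma le_fix_finite (holig : LocallyOligo G) (A : Finset X) :
    {U : Subgroup ↥G | fixSub G A ≤ U}.Finite := by
  classical
  set l := A.toList with hl
  set k := l.length with hk
  set a : Fin k → X := fun i => l.get i with ha
  have haA : ∀ i, a i ∈ A := fun i => Finset.mem_toList.mp (l.get_mem _)
  have haSurj : ∀ x ∈ A, ∃ i, a i = x := by
    intro x hx
    obtain ⟨i, hi⟩ := List.mem_iff_get.mp (Finset.mem_toList.mpr hx)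
    exact ⟨i, hi⟩
  set Y : Set X := ⋃ x ∈ A, MulAction.orbit G x with hY
  have hYmem : ∀ (g : ↥G) (i : Fin k), (g : Equiv.Perm X) (a i) ∈ Y := by
    intro g i
    refine Set.mem_biUnion (haA i) ⟨g, rfl⟩
  obtain ⟨T, hT⟩ := holig Y ⟨A, rfl⟩ (k + k)
  set f : ↥G → Fin (k + k) → X :=
    fun g => Fin.append a (fun i => (g : Equiv.Perm X) (a i)) with hf
  have hfY : ∀ g i, f g i ∈ Y := by
    intro g i
    refine Fin.addCases (motive := fun i => f g i ∈ Y) ?_ ?_ i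
    · intro j
      simp only [hf, Fin.append_left]
      exact Set.mem_biUnion (haA j) (MulAction.mem_orbit_self _)
    · intro j
      simp only [hf, Fin.append_right]
      exact hYmem g j
  have hc : ∀ g : ↥G, ∃ t ∈ T, ∃ w ∈ G, ∀ i, w (t i) = f g i :=
    fun g => hT (f g) (hfY g)
  choose t ht w hwG hwspec using hc
  have key : ∀ g₁ g₂ : ↥G, t g₁ = t g₂ →
      ∃ u ∈ fixSub G A, ∃ v ∈ fixSub G A, g₂ = u * g₁ * v := by
    intro g₁ g₂ hteq
    set u' : Equiv.Perm X := w g₂ * (w g₁)⁻¹ with hu'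
    have hu'G : u' ∈ G := G.mul_mem (hwG g₂) (G.inv_mem (hwG g₁))
    have hu'spec : ∀ i, u' (f g₁ i) = f g₂ i := by
      intro i
      have h1 := hwspec g₁ i
      have h2 := hwspec g₂ i
      rw [← h1, hu']
      simp only [Equiv.Perm.mul_apply, Equiv.Perm.inv_def, Equiv.symm_apply_apply]
      rw [hteq]
      exact h2
    have hufix : ∀ x ∈ A, u' x = x := by
      intro x hx
      obtain ⟨j, rfl⟩ := haSurj x hx
      have h3 := hu'spec (Fin.castAdd k j)
      simpa only [hf, Fin.append_left] using h3
    have hright : ∀ j, u' ((g₁ : Equiv.Perm X) (a j)) = (g₂ : Equiv.Perm X) (a j) := by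
      intro j
      have h3 := hu'spec (Fin.natAdd k j)
      simpa only [hf, Fin.append_right] using h3
    set u : ↥G := ⟨u', hu'G⟩ with hu
    have huf : u ∈ fixSub G A := hufix
    refine ⟨u, huf, (u * g₁)⁻¹ * g₂, ?_, by group⟩
    intro x hx
    obtain ⟨j, rfl⟩ := haSurj x hx
    have hco : (((u * g₁)⁻¹ * g₂ : ↥G) : Equiv.Perm X) (a j)
        = (g₁ : Equiv.Perm X)⁻¹ (u'⁻¹ ((g₂ : Equiv.Perm X) (a j))) := by
      simp [hu, mul_inv_rev, Equiv.Perm.mul_apply]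
    rw [hco, ← hright j]
    simp only [Equiv.Perm.inv_def, Equiv.symm_apply_apply]
  set F : Subgroup ↥G → Set (Fin (k + k) → X) := fun U => t '' (U : Set ↥G) with hF
  have main : ∀ V₁ V₂ : Subgroup ↥G, fixSub G A ≤ V₂ → F V₁ = F V₂ → V₁ ≤ V₂ := by
    intro V₁ V₂ hle heq g hg
    have hmem : t g ∈ F V₂ := by
      rw [← heq]
      exact ⟨g, hg, rfl⟩
    obtain ⟨g', hg', htg⟩ := hmem
    obtain ⟨u, hu, v, hv, hgeq⟩ := key g' g htg
    rw [hgeq]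
    exact V₂.mul_mem (V₂.mul_mem (hle hu) hg') (hle hv)
  apply Set.Finite.of_finite_image (f := F)
  · apply Set.Finite.subset (Set.Finite.finite_subsets T.finite_toSet)
    rintro s ⟨U, hU, rfl⟩
    rintro x ⟨g, hg, rfl⟩
    exact ht g
  · intro U₁ hU₁ U₂ hU₂ hFeq
    exact le_antisymm (main U₁ U₂ hU₂ hFeq) (main U₂ U₁ hU₁ hFeq.symm)

end Aux

/-- A closed, locally oligomorphic permutation group on a countable set has only countably
many open subgroups. -/
theorem countable_open_subgroups {X : Type*} [Countable X] (G : Subgroup (Equiv.Perm X))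
    (hclosed : IsClosed (G : Set (Equiv.Perm X))) (holig : LocallyOligo G) :
    {U : Subgroup G | IsOpen (U : Set G)}.Countable := by
  have hsub : {U : Subgroup G | IsOpen (U : Set G)} ⊆
      ⋃ A : Finset X, {U : Subgroup ↥G | fixSub G A ≤ U} := by
    intro U hU
    obtain ⟨A, hA⟩ := open_contains_fix G U hU
    exact Set.mem_iUnion.mpr ⟨A, fun g hg => hA g hg⟩
  exact Set.Countable.mono hsub
    (Set.countable_iUnion fun A => (le_fix_finite G holig A).countable)
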